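/- Let G be a simple graph on a finite nonempty vertex set V, with n = |V| vertices, m edges, and maximum degree Δ. For c ∈ V, let Star(c) denote the simple graph on V in which two distinct vertices are adjacent if and only if one of them equals c. Then the graph edit distance between G and a star graph on the same vertex set — that is, the minimum, over all simple graphs H on V that are isomorphic to Star(c₀) for some c₀ ∈ V, of the cardinality of the symmetric difference of the edge sets of G and H — equals n + m − 2Δ − 1 (note that 2Δ + 1 ≤ n + m, so this quantity is a non-negative integer). -/

import Mathlib

/-- The star graph on vertex set `V` centered at `c`: two distinct vertices are
adjacent if and only if one of them equals `c`. -/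
def starGraph {V : Type*} (c : V) : SimpleGraph V where
  Adj v w := v ≠ w ∧ (v = c ∨ w = c)
  symm := by
    constructor
    intro v w h
    exact ⟨h.1.symm, h.2.symm⟩
  loopless := by
    constructor
    intro v h
    exact h.1 rfl

instance starGraph.instDecidableRel {V : Type*} [DecidableEq V] (c : V) :
    DecidableRel (starGraph c).Adj := fun v w =>
  inferInstanceAs (Decidable (v ≠ w ∧ (v = c ∨ w = c)))

lemma Finset.card_symmDiff' {α : Type*} [DecidableEq α] (s t : Finset α) :
    (symmDiff s t).card = s.card + t.card - 2 * (s ∩ t).card := by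
  rw [symmDiff_eq_sup_sdiff_inf, Finset.sup_eq_union, Finset.inf_eq_inter,
    Finset.card_sdiff_of_subset (Finset.inter_subset_union)]
  have := Finset.card_union_add_card_inter s t
  have h2 : (s ∩ t).card ≤ s.card := Finset.card_le_card Finset.inter_subset_left
  omega

lemma starGraph_edgeFinset_card {V : Type*} [Fintype V] [DecidableEq V] (c : V) :
    (starGraph c).edgeFinset.card = Fintype.card V - 1 := by
  have h1 : (starGraph c).edgeFinset = (starGraph c).incidenceFinset c := by
    ext e
    induction e using Sym2.ind with
    | _ v w =>
      simp only [SimpleGraph.mem_edgeFinset, SimpleGraph.mem_incidenceFinset,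
        SimpleGraph.mk'_mem_incidenceSet_iff, SimpleGraph.mem_edgeSet]
      constructor
      · intro h; exact ⟨h, by rcases h.2 with h' | h' <;> [left; right] <;> exact h'.symm⟩
      · exact fun h => h.1
  have h2 : (starGraph c).neighborFinset c = Finset.univ.erase c := by
    ext v
    rw [SimpleGraph.mem_neighborFinset]
    simp [starGraph, eq_comm]
  rw [h1, SimpleGraph.card_incidenceFinset_eq_degree, ← SimpleGraph.card_neighborFinset_eq_degree,
    h2, Finset.card_erase_of_mem (Finset.mem_univ c), Finset.card_univ]

lemma inter_star_edgeFinset {V : Type*} [Fintype V] [DecidableEq V]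
    (G : SimpleGraph V) [DecidableRel G.Adj] (c : V) :
    G.edgeFinset ∩ (starGraph c).edgeFinset = G.incidenceFinset c := by
  ext e
  induction e using Sym2.ind with
  | _ v w =>
    simp only [Finset.mem_inter, SimpleGraph.mem_edgeFinset, SimpleGraph.mem_incidenceFinset,
      SimpleGraph.mk'_mem_incidenceSet_iff, SimpleGraph.mem_edgeSet]
    constructor
    · rintro ⟨h, ⟨_, h2⟩⟩
      exact ⟨h, by rcases h2 with h' | h' <;> [left; right] <;> exact h'.symm⟩
    · rintro ⟨h, h2⟩
      exact ⟨h, h.ne, by rcases h2 with h' | h' <;> [left; right] <;> exact h'.symm⟩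

lemma symmDiff_star_ncard {V : Type*} [Fintype V] [DecidableEq V]
    (G : SimpleGraph V) [DecidableRel G.Adj] (c : V) :
    (symmDiff G.edgeSet (starGraph c).edgeSet).ncard
      = G.edgeFinset.card + (Fintype.card V - 1) - 2 * G.degree c := by
  have : symmDiff G.edgeSet (starGraph c).edgeSet
      = ↑(symmDiff G.edgeFinset (starGraph c).edgeFinset) := by
    rw [Finset.coe_symmDiff, SimpleGraph.coe_edgeFinset, SimpleGraph.coe_edgeFinset]
  rw [this, Set.ncard_coe_finset, Finset.card_symmDiff', inter_star_edgeFinset,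
    SimpleGraph.card_incidenceFinset_eq_degree, starGraph_edgeFinset_card]

lemma eq_starGraph_of_iso {V : Type*} [DecidableEq V] {H : SimpleGraph V} {c₀ : V}
    (φ : H ≃g starGraph c₀) : H = starGraph (φ.symm c₀) := by
  ext v w
  rw [← φ.map_adj_iff]
  have key : ∀ x : V, φ x = c₀ ↔ x = φ.symm c₀ := by
    intro x
    constructor
    · intro h; have := congrArg φ.symm h; simpa using this
    · intro h; subst h; simp
  constructor
  · rintro ⟨h1, h2⟩
    refine ⟨fun h => h1 (by rw [h]), ?_⟩
    rcases h2 with h | h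
    · exact Or.inl ((key _).1 h)
    · exact Or.inr ((key _).1 h)
  · rintro ⟨h1, h2⟩
    refine ⟨fun h => h1 (φ.toEquiv.injective h), ?_⟩
    rcases h2 with h | h
    · exact Or.inl ((key _).2 h)
    · exact Or.inr ((key _).2 h)

/-- The graph edit distance between a simple graph `G` on a finite nonempty vertex set
(with `n` vertices, `m` edges, and maximum degree `Δ`) and a star graph on the same
vertex set equals `n + m - 2Δ - 1` (and `2Δ + 1 ≤ n + m`). -/
theorem ged_to_star {V : Type*} [Fintype V] [DecidableEq V] [Nonempty V]
    (G : SimpleGraph V) [DecidableRel G.Adj] :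
    2 * G.maxDegree + 1 ≤ Fintype.card V + G.edgeFinset.card ∧
    sInf {k : ℕ | ∃ H : SimpleGraph V,
        (∃ c₀ : V, Nonempty (H ≃g starGraph c₀)) ∧
        k = (symmDiff G.edgeSet H.edgeSet).ncard}
      = Fintype.card V + G.edgeFinset.card - 2 * G.maxDegree - 1 := by
  set n := Fintype.card V with hn
  set m := G.edgeFinset.card with hm
  obtain ⟨c₀, hc₀⟩ := G.exists_maximal_degree_vertex
  have hdegm : ∀ c : V, G.degree c ≤ m := by
    intro c
    rw [← SimpleGraph.card_incidenceFinset_eq_degree]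
    exact Finset.card_le_card fun e he => by
      rw [SimpleGraph.mem_incidenceFinset] at he
      exact SimpleGraph.mem_edgeFinset.2 (G.incidenceSet_subset c he)
  have hΔn : G.maxDegree < n := G.maxDegree_lt_card_verts
  have hΔm : G.maxDegree ≤ m := hc₀ ▸ hdegm c₀
  have hn1 : 1 ≤ n := Fintype.card_pos
  refine ⟨by omega, ?_⟩
  apply le_antisymm
  · apply Nat.sInf_le
    refine ⟨starGraph c₀, ⟨c₀, ⟨(SimpleGraph.Iso.refl : starGraph c₀ ≃g starGraph c₀)⟩⟩, ?_⟩
    rw [symmDiff_star_ncard, ← hc₀]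
    omega
  · have hne : {k : ℕ | ∃ H : SimpleGraph V,
        (∃ c₁ : V, Nonempty (H ≃g starGraph c₁)) ∧
        k = (symmDiff G.edgeSet H.edgeSet).ncard}.Nonempty :=
      ⟨(symmDiff G.edgeSet (starGraph c₀).edgeSet).ncard, starGraph c₀,
        ⟨c₀, ⟨(SimpleGraph.Iso.refl : starGraph c₀ ≃g starGraph c₀)⟩⟩, rfl⟩
    apply le_csInf hne
    rintro k ⟨H, ⟨c₁, ⟨φ⟩⟩, rfl⟩
    rw [eq_starGraph_of_iso φ, symmDiff_star_ncard]
    have := G.degree_le_maxDegree (φ.symm c₁)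
    omega
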